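/- Let μ ∈ ℝ and ε > 0, and let Y_1, …, Y_k be mutually independent real random variables on a probability space such that P(|Y_j − μ| > ε) ≤ 1/4 for every j. Then any median M of Y_1, …, Y_k (an element m of the sample such that at least half of the Y_j are ≤ m and at least half are ≥ m) satisfies P(|M − μ| > ε) ≤ exp(−k/8). -/

import Mathlib

open MeasureTheory ProbabilityTheory

/-- Median trick: if `Y 1, …, Y k` are mutually independent real random variables each
deviating from `μ` by more than `ε` with probability at most `1/4`, then any median `M`
of the sample (a sample value such that at least half of the `Y j` are `≤ M` and at
least half are `≥ M`) deviates from `μ` by more than `ε` with probability at most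
`exp (-k/8)`. -/
theorem median_concentration {Ω : Type*} [MeasurableSpace Ω]
    (P : Measure Ω) [IsProbabilityMeasure P]
    (k : ℕ) (μ ε : ℝ) (hε : 0 < ε)
    (Y : Fin k → Ω → ℝ) (hYm : ∀ j, Measurable (Y j))
    (hindep : iIndepFun Y P)
    (hfail : ∀ j, P {ω | ε < |Y j ω - μ|} ≤ 1 / 4)
    (M : Ω → ℝ)
    (hmem : ∀ ω, ∃ j, M ω = Y j ω)
    (hlo : ∀ ω, k ≤ 2 * (Finset.univ.filter (fun j : Fin k => Y j ω ≤ M ω)).card)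
    (hhi : ∀ ω, k ≤ 2 * (Finset.univ.filter (fun j : Fin k => M ω ≤ Y j ω)).card) :
    P {ω | ε < |M ω - μ|} ≤ ENNReal.ofReal (Real.exp (-(k : ℝ) / 8)) := by
  classical
  set t : ℝ := Real.log 3 with ht_def
  have ht : 0 ≤ t := Real.log_nonneg (by norm_num)
  have hgm : Measurable (fun x : ℝ => if ε < |x - μ| then (1:ℝ) else 0) := by
    refine Measurable.ite ?_ measurable_const measurable_const
    exact measurableSet_lt measurable_const (by fun_prop)
  set X : Fin k → Ω → ℝ := fun j ω => if ε < |Y j ω - μ| then 1 else 0 with hXdef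
  have hXmeas : ∀ j, Measurable (X j) := fun j => hgm.comp (hYm j)
  have hXindep : iIndepFun X P :=
    hindep.comp (fun _ x => if ε < |x - μ| then (1:ℝ) else 0) (fun _ => hgm)
  have hAmeas : ∀ j, MeasurableSet {ω | ε < |Y j ω - μ|} := by
    intro j
    exact measurableSet_lt measurable_const (by fun_prop)
  -- pointwise identity for exp (t * X j)
  have hexp_eq : ∀ j, (fun ω => Real.exp (t * X j ω)) =
      (fun ω => Set.indicator {ω | ε < |Y j ω - μ|} (fun _ => Real.exp t - 1) ω + 1) := by
    intro j
    funext ω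
    by_cases h : ε < |Y j ω - μ|
    · simp [hXdef, h, Set.indicator_of_mem, Set.mem_setOf_eq]
    · simp [hXdef, h, Set.indicator_of_notMem, Set.mem_setOf_eq]
  have hint : ∀ j, Integrable (fun ω => Real.exp (t * X j ω)) P := by
    intro j
    rw [hexp_eq j]
    exact ((integrable_const _).indicator (hAmeas j)).add (integrable_const _)
  have hp : ∀ j, (P {ω | ε < |Y j ω - μ|}).toReal ≤ 1 / 4 := by
    intro j
    have := ENNReal.toReal_mono (by norm_num) (hfail j)
    simpa using this
  have hmgf : ∀ j, mgf (X j) P t ≤ 3 / 2 := by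
    intro j
    have : mgf (X j) P t = (Real.exp t - 1) * (P {ω | ε < |Y j ω - μ|}).toReal + 1 := by
      rw [mgf, hexp_eq j, integral_add ((integrable_const _).indicator (hAmeas j))
        (integrable_const _), integral_indicator_const _ (hAmeas j)]
      simp [mul_comm, measureReal_def]
    rw [this, ht_def, Real.exp_log (by norm_num)]
    nlinarith [hp j]
  -- Chernoff bound on S = ∑ X j
  have hintS : Integrable (fun ω => Real.exp (t * (∑ j, X j) ω)) P :=
    hXindep.integrable_exp_mul_sum hXmeas (fun j _ => hint j)
  have hchern := measure_ge_le_exp_mul_mgf (X := ∑ j, X j) ((k : ℝ) / 2) ht hintS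
  rw [hXindep.mgf_sum hXmeas Finset.univ] at hchern
  have hprod : ∏ j, mgf (X j) P t ≤ (3 / 2 : ℝ) ^ k := by
    calc ∏ j, mgf (X j) P t ≤ ∏ _j : Fin k, (3 / 2 : ℝ) :=
          Finset.prod_le_prod (fun j _ => mgf_nonneg) (fun j _ => hmgf j)
      _ = (3 / 2 : ℝ) ^ k := by simp [div_pow]
  -- numeric bound
  have hlog34 : Real.log (3 / 4) ≤ -(1 / 4) := by
    have := Real.log_le_sub_one_of_pos (show (0:ℝ) < 3 / 4 by norm_num)
    linarith
  have hnum : Real.exp (-t * ((k : ℝ) / 2)) * (3 / 2 : ℝ) ^ k ≤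
      Real.exp (-(k : ℝ) / 8) := by
    have h32 : (3 / 2 : ℝ) ^ k = Real.exp ((k : ℝ) * Real.log (3 / 2)) := by
      rw [Real.exp_nat_mul, Real.exp_log (by norm_num)]
    rw [h32, ← Real.exp_add, Real.exp_le_exp]
    have h1 : Real.log (3 / 4) = Real.log 3 - Real.log 4 :=
      Real.log_div (by norm_num) (by norm_num)
    have h2 : Real.log (3 / 2) = Real.log 3 - Real.log 2 :=
      Real.log_div (by norm_num) (by norm_num)
    have h3 : Real.log 4 = 2 * Real.log 2 := by
      rw [show (4:ℝ) = 2 ^ 2 by norm_num, Real.log_pow]; push_cast; ring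
    have hk : (0:ℝ) ≤ (k : ℝ) := Nat.cast_nonneg k
    have : -t * ((k : ℝ) / 2) + (k : ℝ) * Real.log (3 / 2)
        = (k : ℝ) * (Real.log (3 / 4) / 2) := by
      rw [ht_def]; rw [h1, h2, h3]; ring
    rw [this]
    nlinarith
  have hS : (P {ω | (k : ℝ) / 2 ≤ (∑ j, X j) ω}).toReal ≤ Real.exp (-(k : ℝ) / 8) := by
    refine hchern.trans ?_
    calc Real.exp (-t * ((k : ℝ) / 2)) * ∏ j, mgf (X j) P t
        ≤ Real.exp (-t * ((k : ℝ) / 2)) * (3 / 2 : ℝ) ^ k := by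
          exact mul_le_mul_of_nonneg_left hprod (Real.exp_pos _).le
      _ ≤ Real.exp (-(k : ℝ) / 8) := hnum
  -- event inclusion
  have hsub : {ω | ε < |M ω - μ|} ⊆ {ω | (k : ℝ) / 2 ≤ (∑ j, X j) ω} := by
    intro ω hω
    simp only [Set.mem_setOf_eq] at hω ⊢
    have hsum : (∑ j, X j) ω = ((Finset.univ.filter
        (fun j : Fin k => ε < |Y j ω - μ|)).card : ℝ) := by
      simp [hXdef, Finset.sum_apply, Finset.sum_boole]
    have key : ∀ s : Finset (Fin k), k ≤ 2 * s.card →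
        s ⊆ Finset.univ.filter (fun j : Fin k => ε < |Y j ω - μ|) →
        (k : ℝ) / 2 ≤ (∑ j, X j) ω := by
      intro s hks hss
      rw [hsum]
      have := Finset.card_le_card hss
      have : k ≤ 2 * (Finset.univ.filter (fun j : Fin k => ε < |Y j ω - μ|)).card := by omega
      rw [div_le_iff₀ (by norm_num)]
      have hcast : (k : ℝ) ≤ 2 * ((Finset.univ.filter
          (fun j : Fin k => ε < |Y j ω - μ|)).card : ℝ) := by exact_mod_cast this
      linarith
    rcases lt_abs.mp hω with h | h
    · refine key (Finset.univ.filter (fun j : Fin k => M ω ≤ Y j ω)) (hhi ω) ?_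
      intro j hj
      simp only [Finset.mem_filter, Finset.mem_univ, true_and] at hj ⊢
      have : ε < Y j ω - μ := by linarith
      exact lt_of_lt_of_le this (le_abs_self _)
    · refine key (Finset.univ.filter (fun j : Fin k => Y j ω ≤ M ω)) (hlo ω) ?_
      intro j hj
      simp only [Finset.mem_filter, Finset.mem_univ, true_and] at hj ⊢
      have : ε < -(Y j ω - μ) := by linarith
      exact lt_of_lt_of_le this (neg_le_abs _)
  calc P {ω | ε < |M ω - μ|} ≤ P {ω | (k : ℝ) / 2 ≤ (∑ j, X j) ω} := measure_mono hsub
    _ = ENNReal.ofReal (P {ω | (k : ℝ) / 2 ≤ (∑ j, X j) ω}).toReal :=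
        (ENNReal.ofReal_toReal (measure_ne_top _ _)).symm
    _ ≤ ENNReal.ofReal (Real.exp (-(k : ℝ) / 8)) := ENNReal.ofReal_le_ofReal hS
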